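/- Let n ≥ 1 and let V be a real symmetric 2n×2n matrix such that the complex Hermitian matrix V + (i/2)Ω is positive semidefinite, where Ω is the standard symplectic form. Then V + Ω V Ωᵀ − I is positive semidefinite, i.e., for every r ∈ ℝ^{2n}, rᵀ(V + Ω V Ωᵀ)r ≥ |r|². -/

import Mathlib

open Matrix ComplexOrder

/-- The standard symplectic form `Ω = ⊕ᵢ [[0,1],[-1,0]]` on `ℝ^{2n}`. -/
def Omega (n : ℕ) : Matrix (Fin (2 * n)) (Fin (2 * n)) ℝ :=
  Matrix.of fun i j =>
    if (i : ℕ) % 2 = 0 ∧ (j : ℕ) = (i : ℕ) + 1 then 1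
    else if (j : ℕ) % 2 = 0 ∧ (i : ℕ) = (j : ℕ) + 1 then -1
    else 0

lemma Omega_transpose (n : ℕ) : (Omega n)ᵀ = - Omega n := by
  ext i j
  simp only [Omega, transpose_apply, Matrix.neg_apply, of_apply]
  split_ifs with h1 h2 h3 <;> first | omega | norm_num

lemma Omega_mul_self (n : ℕ) : Omega n * Omega n = -1 := by
  ext i j
  rw [mul_apply, neg_apply, one_apply]
  rcases Nat.even_or_odd (i:ℕ) with he|ho
  · obtain ⟨m, hm⟩ := he
    have hlt : (i:ℕ) + 1 < 2*n := by have := i.isLt; omega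
    rw [Finset.sum_eq_single (⟨(i:ℕ)+1, hlt⟩ : Fin (2*n))]
    · simp only [Omega, of_apply, Fin.ext_iff, and_true, true_and]
      split_ifs <;> first | omega | norm_num
    · intro b _ hb
      have hb' : (b:ℕ) ≠ (i:ℕ)+1 := by simpa [Fin.ext_iff] using hb
      simp only [Omega, of_apply]
      split_ifs <;> first | omega | norm_num
    · simp
  · obtain ⟨m, hm⟩ := ho
    have hlt : (i:ℕ) - 1 < 2*n := by have := i.isLt; omega
    rw [Finset.sum_eq_single (⟨(i:ℕ)-1, hlt⟩ : Fin (2*n))]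
    · simp only [Omega, of_apply, Fin.ext_iff, and_true, true_and]
      split_ifs <;> first | omega | norm_num
    · intro b _ hb
      have hb' : (b:ℕ) ≠ (i:ℕ)-1 := by simpa [Fin.ext_iff] using hb
      simp only [Omega, of_apply]
      split_ifs <;> first | omega | norm_num
    · simp

/-- if a real symmetric `V` satisfies the uncertainty relation
`V + (i/2)Ω ⪰ 0` (as a complex Hermitian matrix), then `V + Ω V Ωᵀ − I ⪰ 0`, i.e.
`rᵀ (V + Ω V Ωᵀ) r ≥ |r|²` for every `r ∈ ℝ^{2n}`. -/
theorem uncertainty_implies_W_posSemidef (n : ℕ) (hn : 1 ≤ n)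
    (V : Matrix (Fin (2 * n)) (Fin (2 * n)) ℝ) (hsym : Vᵀ = V)
    (huncert : (V.map Complex.ofReal +
        (Complex.I / 2) • (Omega n).map Complex.ofReal).PosSemidef) :
    (V + Omega n * V * (Omega n)ᵀ - 1).PosSemidef ∧
    ∀ r : Fin (2 * n) → ℝ,
      (∑ i, r i ^ 2) ≤ r ⬝ᵥ ((V + Omega n * V * (Omega n)ᵀ) *ᵥ r) := by
  have hΩt : (Omega n)ᵀ = -(Omega n) := Omega_transpose n
  have hΩ2 : Omega n * Omega n = -1 := Omega_mul_self n
  -- generic transpose-dotProduct helper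
  have hdt : ∀ (A : Matrix (Fin (2*n)) (Fin (2*n)) ℝ) (x y : Fin (2*n) → ℝ),
      (Aᵀ *ᵥ x) ⬝ᵥ y = x ⬝ᵥ (A *ᵥ y) := by
    intro A x y
    rw [mulVec_transpose, dotProduct_mulVec]
  have key : ∀ r : Fin (2*n) → ℝ, r ⬝ᵥ r ≤ r ⬝ᵥ ((V + Omega n * V * (Omega n)ᵀ) *ᵥ r) := by
    intro r
    set w : Fin (2*n) → ℝ := (Omega n)ᵀ *ᵥ r with hw
    have f1 : r ⬝ᵥ (Omega n *ᵥ r) = 0 := by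
      have h := hdt (Omega n) r r
      rw [hΩt, neg_mulVec, neg_dotProduct, dotProduct_comm] at h
      linarith
    have fq : r ⬝ᵥ (Omega n *ᵥ w) = r ⬝ᵥ r := by
      rw [hw, mulVec_mulVec, hΩt, mul_neg, hΩ2, neg_neg, one_mulVec]
    have fq' : w ⬝ᵥ (Omega n *ᵥ r) = -(r ⬝ᵥ r) := by
      rw [hw, hdt, mulVec_mulVec, hΩ2, neg_mulVec, one_mulVec, dotProduct_neg]
    have frw : r ⬝ᵥ w = 0 := by
      rw [hw, hΩt, neg_mulVec, dotProduct_neg, f1, neg_zero]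
    have fs : w ⬝ᵥ (Omega n *ᵥ w) = 0 := by
      conv_lhs => rw [hw]
      rw [hdt, mulVec_mulVec, hΩ2, neg_mulVec, one_mulVec, dotProduct_neg, frw, neg_zero]
    have fb : r ⬝ᵥ (V *ᵥ w) = w ⬝ᵥ (V *ᵥ r) := by
      have h := hdt V r w
      rw [hsym] at h
      rw [← h, dotProduct_comm, ← hsym, hdt, hsym]
    have fc : w ⬝ᵥ (V *ᵥ w) = r ⬝ᵥ ((Omega n * V * (Omega n)ᵀ) *ᵥ r) := by
      conv_lhs => rw [hw]
      rw [hdt, mulVec_mulVec, mulVec_mulVec]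
    -- complex test vector
    set rc : Fin (2*n) → ℂ := fun j => (r j : ℂ) with hrc
    set wc : Fin (2*n) → ℂ := fun j => (w j : ℂ) with hwc
    set z : Fin (2*n) → ℂ := rc + Complex.I • wc with hz
    have hstarz : star z = rc - Complex.I • wc := by
      funext j
      simp [hz, hrc, hwc, Complex.conj_ofReal, sub_eq_add_neg]
    have hmapv : ∀ (A : Matrix (Fin (2*n)) (Fin (2*n)) ℝ) (x : Fin (2*n) → ℝ),
        A.map Complex.ofReal *ᵥ (fun j => ((x j : ℂ))) = fun j => (((A *ᵥ x) j : ℝ) : ℂ) := by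
      intro A x
      funext j
      exact (RingHom.map_mulVec Complex.ofRealHom A x j).symm
    have hmapd : ∀ (x y : Fin (2*n) → ℝ),
        (fun j => ((x j : ℂ))) ⬝ᵥ (fun j => ((y j : ℂ))) = ((x ⬝ᵥ y : ℝ) : ℂ) := by
      intro x y
      exact (RingHom.map_dotProduct Complex.ofRealHom x y).symm
    have hexp : ∀ (A : Matrix (Fin (2*n)) (Fin (2*n)) ℝ),
        star z ⬝ᵥ (A.map Complex.ofReal *ᵥ z) =
          ((r ⬝ᵥ (A *ᵥ r) + w ⬝ᵥ (A *ᵥ w) : ℝ) : ℂ)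
          + Complex.I * ((r ⬝ᵥ (A *ᵥ w) - w ⬝ᵥ (A *ᵥ r) : ℝ) : ℂ) := by
      intro A
      rw [hstarz, hz, mulVec_add, mulVec_smul, hrc, hwc, hmapv, hmapv]
      simp only [sub_dotProduct, dotProduct_add, dotProduct_smul, smul_dotProduct,
        smul_eq_mul]
      rw [hmapd, hmapd, hmapd, hmapd]
      push_cast
      ring_nf
      simp [Complex.I_sq]
    have h0 := huncert.dotProduct_mulVec_nonneg z
    rw [add_mulVec, dotProduct_add, smul_mulVec, dotProduct_smul, smul_eq_mul,
      hexp, hexp, fb, fq, fq', f1, fs, fc] at h0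
    have h0' : (0:ℂ) ≤ ((r ⬝ᵥ (V *ᵥ r) + r ⬝ᵥ ((Omega n * V * (Omega n)ᵀ) *ᵥ r)
        - r ⬝ᵥ r : ℝ) : ℂ) := by
      refine le_of_le_of_eq h0 ?_
      push_cast
      ring_nf
      simp [Complex.I_sq]
      ring
    rw [Complex.zero_le_real] at h0'
    rw [add_mulVec, dotProduct_add]
    linarith
  constructor
  · refine posSemidef_iff_dotProduct_mulVec.mpr ⟨?_, ?_⟩
    · -- Hermitian
      unfold IsHermitian
      rw [conjTranspose_eq_transpose_of_trivial]
      rw [transpose_sub, transpose_add, hsym, transpose_one]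
      congr 1
      rw [transpose_mul, transpose_mul, transpose_transpose, hsym]
      rw [mul_assoc]
    · intro x
      have := key x
      simp only [star_trivial, sub_mulVec, dotProduct_sub, one_mulVec]
      linarith
  · intro r
    have := key r
    have hsq : ∑ i, r i ^ 2 = r ⬝ᵥ r := by
      simp [dotProduct, pow_two]
    linarith
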